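/- Let λ : ℕ → (0,∞) satisfy λ(n) = o(n) and lim_{n→∞} λ(n) = ∞, fix an arbitrarily small ε > 0, and let v : ℕ → ℕ. For each n, let C_n be a Bernoulli(p(n)) random m(n)×n test matrix with p(n) = 1/⌈λ(n)^{1+ε}⌉ and m(n) = ⌈2e·(⌈λ(n)^{1+ε}⌉)²·log n + 4e·v(n)·⌈λ(n)^{1+ε}⌉⌉ = (2e·λ(n)^{2(1+ε)}·log n + 4e·v(n)·λ(n)^{1+ε})·(1+o(1)), drawn independently of the defective set 𝒟_n of the Poisson PGT model on n subjects with parameter λ(n), and let y_n be the true outcome vector. Then the probability that there exists a corrupted outcome vector z ∈ {0,1}^{m(n)} at Hamming distance at most v(n) from y_n for which the v(n)-tolerant decoder applied to C_n and z outputs a set different from 𝒟_n tends to 0 as n → ∞. -/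

import Mathlib

open Filter Finset

/-- `P(𝒟 = S)` in the Poisson PGT model on `n` subjects with parameter `lam`. -/
noncomputable def pgtWeight (n : ℕ) (lam : ℝ) (S : Finset (Fin n)) : ℝ :=
  (Real.exp lam / ∑ d ∈ Finset.range (n + 1), lam ^ d / d.factorial) *
    lam ^ S.card * Real.exp (-lam) * (n - S.card).factorial / n.factorial

/-- Probability of a realization `C` of an i.i.d. Bernoulli(p) random test matrix. -/
noncomputable def bernWeight {m n : ℕ} (p : ℝ) (C : Fin m → Fin n → Bool) : ℝ :=
  ∏ j : Fin m, ∏ i : Fin n, if C j i then p else 1 - p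

/-- Outcome vector: test `j` is positive iff some defective participates in it. -/
def outcome {m n : ℕ} (C : Fin m → Fin n → Bool) (S : Finset (Fin n)) : Fin m → Bool :=
  fun j => decide (∃ i ∈ S, C j i = true)

/-- The `v`-tolerant decoder: `D̂ = {i : N_i ≤ v}` where
`N_i = |{j : x_i(j) = 1 and z(j) = 0}|`. -/
def tolDecoder {m n : ℕ} (C : Fin m → Fin n → Bool) (z : Fin m → Bool) (v : ℕ) :
    Finset (Fin n) :=
  Finset.univ.filter (fun i =>
    (Finset.univ.filter (fun j => C j i = true ∧ z j = false)).card ≤ v)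

/-- Probability that some corruption of the outcome vector by at most `v` errors makes the
`v`-tolerant decoder fail, for an i.i.d. Bernoulli(p) test matrix with `mn` tests drawn
independently of the Poisson PGT defective set. -/
noncomputable def errProbTol (n mn v : ℕ) (lam p : ℝ) : ℝ :=
  ∑ C : Fin mn → Fin n → Bool, ∑ S : Finset (Fin n),
    bernWeight p C * pgtWeight n lam S *
      (if ∃ z : Fin mn → Bool,
          hammingDist z (outcome C S) ≤ v ∧ tolDecoder C z v ≠ S then 1 else 0)

noncomputable def rowW {n : ℕ} (p : ℝ) (r : Fin n → Bool) : ℝ :=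
  ∏ i : Fin n, if r i then p else 1 - p

lemma sum_pi_prod {ι α : Type*} [Fintype ι] [DecidableEq ι] [Fintype α] (g : ι → α → ℝ) :
    ∑ r : ι → α, ∏ i, g i (r i) = ∏ i, ∑ a, g i a := by
  rw [Finset.prod_univ_sum, Fintype.piFinset_univ]

lemma sum_rowW (n : ℕ) (p : ℝ) : ∑ r : Fin n → Bool, rowW p r = 1 := by
  unfold rowW
  rw [sum_pi_prod (g := fun _ b => if b = true then p else 1 - p)]
  simp [Fintype.sum_bool]

lemma sum_rowW_ind (n : ℕ) (p : ℝ) (S : Finset (Fin n)) (i : Fin n) (hi : i ∉ S) :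
    ∑ r : Fin n → Bool, rowW p r *
      (if (r i = true ∧ ∀ k ∈ S, r k = false) then (1:ℝ) else 0)
      = p * (1 - p) ^ S.card := by
  have hfac : ∀ r : Fin n → Bool,
      rowW p r * (if (r i = true ∧ ∀ k ∈ S, r k = false) then (1:ℝ) else 0)
      = ∏ k : Fin n, ((if r k then p else 1 - p) *
          (if k = i then (if r k then 1 else 0) else if k ∈ S then (if r k then 0 else 1) else 1)) := by
    intro r
    rw [Finset.prod_mul_distrib]
    unfold rowW
    congr 1
    by_cases hc : r i = true ∧ ∀ k ∈ S, r k = false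
    · rw [if_pos hc]
      rw [eq_comm]
      apply Finset.prod_eq_one
      intro k _
      by_cases hki : k = i
      · simp [hki, hc.1]
      · by_cases hkS : k ∈ S
        · simp [hki, hkS, hc.2 k hkS]
        · simp [hki, hkS]
    · rw [if_neg hc]
      rw [eq_comm]
      push_neg at hc
      by_cases hri : r i = true
      · obtain ⟨k, hkS, hrk⟩ := hc hri
        apply Finset.prod_eq_zero (Finset.mem_univ k)
        have hki : k ≠ i := fun h => hi (h ▸ hkS)
        simp [hki, hkS, hrk]
      · apply Finset.prod_eq_zero (Finset.mem_univ i)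
        simp [hri]
  rw [Finset.sum_congr rfl (fun r _ => hfac r),
    sum_pi_prod (g := fun k b => (if b = true then p else 1 - p) *
      (if k = i then (if b = true then (1:ℝ) else 0) else if k ∈ S then (if b = true then 0 else 1) else 1))]
  have : ∀ k : Fin n, (∑ a : Bool, ((if a then p else 1 - p) *
          (if k = i then (if a then (1:ℝ) else 0) else if k ∈ S then (if a then 0 else 1) else 1)))
      = if k = i then p else if k ∈ S then 1 - p else 1 := by
    intro k
    rw [Fintype.sum_bool]
    by_cases hki : k = i
    · simp [hki]
    · by_cases hkS : k ∈ S <;> simp [hki, hkS]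
  rw [Finset.prod_congr rfl (fun k _ => this k)]
  rw [← Finset.mul_prod_erase Finset.univ _ (Finset.mem_univ i), if_pos rfl]
  congr 1
  have : ∀ k ∈ Finset.univ.erase i,
      (if k = i then p else if k ∈ S then 1 - p else 1) = (if k ∈ S then 1 - p else 1) := by
    intro k hk
    rw [if_neg (Finset.ne_of_mem_erase hk)]
  rw [Finset.prod_congr rfl this, ← Finset.prod_filter]
  have hfe : (Finset.univ.erase i).filter (· ∈ S) = S := by
    ext k
    simp only [Finset.mem_filter, Finset.mem_erase, Finset.mem_univ, true_and, and_true]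
    constructor
    · exact fun h => h.2
    · intro h; exact ⟨fun he => hi (he ▸ h), h⟩
  rw [hfe, Finset.prod_const]

lemma sum_rowW_t (n : ℕ) (p t : ℝ) (S : Finset (Fin n)) (i : Fin n) (hi : i ∉ S) :
    ∑ r : Fin n → Bool, rowW p r *
      (if (r i = true ∧ ∀ k ∈ S, r k = false) then t else 1)
      = 1 - (1 - t) * (p * (1 - p) ^ S.card) := by
  have : ∀ r : Fin n → Bool,
      rowW p r * (if (r i = true ∧ ∀ k ∈ S, r k = false) then t else 1)
      = rowW p r - (1 - t) * (rowW p r *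
          (if (r i = true ∧ ∀ k ∈ S, r k = false) then (1:ℝ) else 0)) := by
    intro r
    by_cases h : (r i = true ∧ ∀ k ∈ S, r k = false)
    · rw [if_pos h, if_pos h]; ring
    · rw [if_neg h, if_neg h]; ring
  rw [Finset.sum_congr rfl (fun r _ => this r), Finset.sum_sub_distrib, ← Finset.mul_sum,
    sum_rowW, sum_rowW_ind n p S i hi]

lemma sum_bernWeight (m n : ℕ) (p : ℝ) : ∑ C : Fin m → Fin n → Bool, bernWeight p C = 1 := by
  have : ∀ C : Fin m → Fin n → Bool, bernWeight p C = ∏ j : Fin m, rowW p (C j) := fun _ => rfl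
  rw [Finset.sum_congr rfl (fun C _ => this C),
    sum_pi_prod (g := fun _ r => rowW p r)]
  rw [Finset.prod_congr rfl (fun j _ => sum_rowW n p), Finset.prod_const_one]

-- outcome C S j = false ↔ ∀ k ∈ S, C j k = false

lemma outcome_false_iff {m n : ℕ} (C : Fin m → Fin n → Bool) (S : Finset (Fin n)) (j : Fin m) :
    outcome C S j = false ↔ ∀ k ∈ S, C j k = false := by
  simp [outcome]

lemma sum_bern_pow (m n : ℕ) (p t : ℝ) (S : Finset (Fin n)) (i : Fin n) (hi : i ∉ S) :
    ∑ C : Fin m → Fin n → Bool, bernWeight p C *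
      t ^ (Finset.univ.filter (fun j => C j i = true ∧ outcome C S j = false)).card
      = (1 - (1 - t) * (p * (1 - p) ^ S.card)) ^ m := by
  have hterm : ∀ C : Fin m → Fin n → Bool, bernWeight p C *
      t ^ (Finset.univ.filter (fun j => C j i = true ∧ outcome C S j = false)).card
      = ∏ j : Fin m, (rowW p (C j) *
          (if ((C j) i = true ∧ ∀ k ∈ S, (C j) k = false) then t else 1)) := by
    intro C
    rw [Finset.prod_mul_distrib]
    congr 1
    have : t ^ (Finset.univ.filter (fun j => C j i = true ∧ outcome C S j = false)).card
        = ∏ j ∈ Finset.univ.filter (fun j => C j i = true ∧ outcome C S j = false), t := by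
      rw [Finset.prod_const]
    rw [this, Finset.prod_filter]
    apply Finset.prod_congr rfl
    intro j _
    by_cases h : C j i = true ∧ outcome C S j = false
    · rw [if_pos h, if_pos ⟨h.1, (outcome_false_iff C S j).mp h.2⟩]
    · rw [if_neg h, if_neg]
      intro hc
      exact h ⟨hc.1, (outcome_false_iff C S j).mpr hc.2⟩
  rw [Finset.sum_congr rfl (fun C _ => hterm C),
    sum_pi_prod (g := fun _ r => rowW p r * (if (r i = true ∧ ∀ k ∈ S, r k = false) then t else 1))]
  rw [Finset.prod_congr rfl (fun j _ => sum_rowW_t n p t S i hi), Finset.prod_const,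
    Finset.card_univ, Fintype.card_fin]

lemma exists_bad_col {m n v : ℕ} (C : Fin m → Fin n → Bool) (S : Finset (Fin n))
    (h : ∃ z : Fin m → Bool, hammingDist z (outcome C S) ≤ v ∧ tolDecoder C z v ≠ S) :
    ∃ i, i ∉ S ∧
      (Finset.univ.filter (fun j => C j i = true ∧ outcome C S j = false)).card ≤ 2 * v := by
  obtain ⟨z, hz, hne⟩ := h
  have hdist : (Finset.univ.filter (fun j => z j ≠ outcome C S j)).card ≤ v := by
    have hh : hammingDist z (outcome C S)
        = (Finset.univ.filter (fun j => z j ≠ outcome C S j)).card := rfl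
    rw [← hh]; exact hz
  -- S ⊆ tolDecoder C z v
  have hsub : S ⊆ tolDecoder C z v := by
    intro i hiS
    rw [tolDecoder, Finset.mem_filter]
    refine ⟨Finset.mem_univ i, le_trans (Finset.card_le_card ?_) hdist⟩
    intro j hj
    rw [Finset.mem_filter] at hj ⊢
    refine ⟨Finset.mem_univ j, ?_⟩
    have hyj : outcome C S j = true := by
      rw [outcome]; simp only [decide_eq_true_eq]; exact ⟨i, hiS, hj.2.1⟩
    rw [hj.2.2, hyj]; simp
  -- get i in decoder, not in S
  have : ¬ (tolDecoder C z v ⊆ S) := by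
    intro hss
    exact hne (Finset.Subset.antisymm hss hsub)
  obtain ⟨i, hiD, hiS⟩ := Finset.not_subset.mp this
  refine ⟨i, hiS, ?_⟩
  have hNi : (Finset.univ.filter (fun j => C j i = true ∧ z j = false)).card ≤ v := by
    rw [tolDecoder, Finset.mem_filter] at hiD
    exact hiD.2
  have hsplit : (Finset.univ.filter (fun j => C j i = true ∧ outcome C S j = false))
      ⊆ (Finset.univ.filter (fun j => C j i = true ∧ z j = false)) ∪
        (Finset.univ.filter (fun j => z j ≠ outcome C S j)) := by
    intro j hj
    rw [Finset.mem_filter] at hj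
    rw [Finset.mem_union, Finset.mem_filter, Finset.mem_filter]
    by_cases hzj : z j = false
    · exact Or.inl ⟨Finset.mem_univ j, hj.2.1, hzj⟩
    · refine Or.inr ⟨Finset.mem_univ j, ?_⟩
      rw [Bool.not_eq_false] at hzj
      rw [hzj, hj.2.2]; simp
  calc (Finset.univ.filter (fun j => C j i = true ∧ outcome C S j = false)).card
      ≤ _ := Finset.card_le_card hsplit
    _ ≤ _ + _ := Finset.card_union_le _ _
    _ ≤ v + v := Nat.add_le_add hNi hdist
    _ = 2 * v := (Nat.two_mul v).symm

lemma bernWeight_nonneg {m n : ℕ} {p : ℝ} (hp0 : 0 ≤ p) (hp1 : p ≤ 1)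
    (C : Fin m → Fin n → Bool) : 0 ≤ bernWeight p C := by
  apply Finset.prod_nonneg; intro j _
  apply Finset.prod_nonneg; intro i _
  by_cases h : C j i <;> simp [h] <;> linarith

lemma key_bound (m n v : ℕ) (p : ℝ) (hp0 : 0 ≤ p) (hp1 : p ≤ 1) (S : Finset (Fin n)) :
    ∑ C : Fin m → Fin n → Bool, bernWeight p C *
      (if ∃ z : Fin m → Bool,
          hammingDist z (outcome C S) ≤ v ∧ tolDecoder C z v ≠ S then (1:ℝ) else 0)
    ≤ n * (Real.exp (2 * v) * (1 - (1 - Real.exp (-1)) * (p * (1 - p) ^ S.card)) ^ m) := by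
  set t : ℝ := Real.exp (-1) with ht
  have ht0 : 0 < t := Real.exp_pos _
  have ht1 : t ≤ 1 := by
    rw [ht, Real.exp_le_one_iff]; norm_num
  have hind : ∀ C : Fin m → Fin n → Bool,
      (if ∃ z : Fin m → Bool,
          hammingDist z (outcome C S) ≤ v ∧ tolDecoder C z v ≠ S then (1:ℝ) else 0)
      ≤ ∑ i ∈ Sᶜ, Real.exp (2 * v) *
          t ^ (Finset.univ.filter (fun j => C j i = true ∧ outcome C S j = false)).card := by
    intro C
    by_cases h : ∃ z : Fin m → Bool,
        hammingDist z (outcome C S) ≤ v ∧ tolDecoder C z v ≠ S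
    · rw [if_pos h]
      obtain ⟨i, hiS, hNi⟩ := exists_bad_col C S h
      have hterm : (1:ℝ) ≤ Real.exp (2 * v) *
          t ^ (Finset.univ.filter (fun j => C j i = true ∧ outcome C S j = false)).card := by
        have h1 : t ^ (2 * v) ≤
            t ^ (Finset.univ.filter (fun j => C j i = true ∧ outcome C S j = false)).card :=
          pow_le_pow_of_le_one ht0.le ht1 hNi
        have h2 : Real.exp (2 * v) * t ^ (2 * v) = 1 := by
          rw [ht, ← Real.exp_nat_mul, ← Real.exp_add]
          norm_num
        calc (1:ℝ) = Real.exp (2 * v) * t ^ (2 * v) := h2.symm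
          _ ≤ _ := by
              apply mul_le_mul_of_nonneg_left h1 (Real.exp_pos _).le
      refine le_trans hterm (Finset.single_le_sum (f := fun i => Real.exp (2 * v) *
          t ^ (Finset.univ.filter (fun j => C j i = true ∧ outcome C S j = false)).card)
          ?_ (Finset.mem_compl.mpr hiS))
      intro i _
      positivity
    · rw [if_neg h]
      apply Finset.sum_nonneg
      intro i _
      positivity
  calc ∑ C : Fin m → Fin n → Bool, bernWeight p C *
        (if ∃ z : Fin m → Bool,
            hammingDist z (outcome C S) ≤ v ∧ tolDecoder C z v ≠ S then (1:ℝ) else 0)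
      ≤ ∑ C : Fin m → Fin n → Bool, bernWeight p C *
          (∑ i ∈ Sᶜ, Real.exp (2 * v) *
            t ^ (Finset.univ.filter (fun j => C j i = true ∧ outcome C S j = false)).card) := by
        apply Finset.sum_le_sum
        intro C _
        exact mul_le_mul_of_nonneg_left (hind C) (bernWeight_nonneg hp0 hp1 C)
    _ = ∑ i ∈ Sᶜ, Real.exp (2 * v) * ∑ C : Fin m → Fin n → Bool, bernWeight p C *
          t ^ (Finset.univ.filter (fun j => C j i = true ∧ outcome C S j = false)).card := by
        simp_rw [Finset.mul_sum]
        rw [Finset.sum_comm]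
        apply Finset.sum_congr rfl
        intro i _
        apply Finset.sum_congr rfl
        intro C _
        ring
    _ = ∑ i ∈ Sᶜ, Real.exp (2 * v) * (1 - (1 - t) * (p * (1 - p) ^ S.card)) ^ m := by
        apply Finset.sum_congr rfl
        intro i hi
        rw [sum_bern_pow m n p t S i (Finset.mem_compl.mp hi)]
    _ = (Sᶜ.card : ℝ) * (Real.exp (2 * v) * (1 - (1 - t) * (p * (1 - p) ^ S.card)) ^ m) := by
        rw [Finset.sum_const, nsmul_eq_mul]
    _ ≤ n * (Real.exp (2 * v) * (1 - (1 - t) * (p * (1 - p) ^ S.card)) ^ m) := by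
        apply mul_le_mul_of_nonneg_right
        · exact_mod_cast (by simpa using Finset.card_le_univ Sᶜ : Sᶜ.card ≤ n)
        · have h1p0 : 0 ≤ (1 - p) ^ S.card := pow_nonneg (by linarith) _
          have hq0 : 0 ≤ p * (1 - p) ^ S.card := mul_nonneg hp0 h1p0
          have h1p : (1 - p) ^ S.card ≤ 1 := pow_le_one₀ (by linarith) (by linarith)
          have hq1 : p * (1 - p) ^ S.card ≤ 1 := by nlinarith
          have hb : 0 ≤ 1 - (1 - t) * (p * (1 - p) ^ S.card) := by nlinarith
          exact mul_nonneg (Real.exp_pos _).le (pow_nonneg hb m)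

lemma sum_card_grp (n : ℕ) (f : ℕ → ℝ) :
    ∑ S : Finset (Fin n), f S.card = ∑ d ∈ Finset.range (n+1), (n.choose d : ℝ) * f d := by
  rw [← Finset.powerset_univ, Finset.sum_powerset]
  rw [Finset.card_univ, Fintype.card_fin]
  apply Finset.sum_congr rfl
  intro j _
  have : ∀ t ∈ Finset.powersetCard j (Finset.univ : Finset (Fin n)), f t.card = f j := by
    intro t ht
    rw [(Finset.mem_powersetCard.mp ht).2]
  rw [Finset.sum_congr rfl this, Finset.sum_const, Finset.card_powersetCard,
    Finset.card_univ, Fintype.card_fin, nsmul_eq_mul]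

lemma sumexp_pos (n : ℕ) {lam : ℝ} (hl : 0 < lam) :
    (0:ℝ) < ∑ d ∈ Finset.range (n + 1), lam ^ d / d.factorial := by
  apply Finset.sum_pos
  · intro d _
    positivity
  · exact ⟨0, Finset.mem_range.mpr (Nat.succ_pos n)⟩

lemma pgtWeight_nonneg (n : ℕ) {lam : ℝ} (hl : 0 < lam) (S : Finset (Fin n)) :
    0 ≤ pgtWeight n lam S := by
  have := sumexp_pos n hl
  unfold pgtWeight
  positivity

lemma choose_fact_div (n d : ℕ) (hdn : d ≤ n) :
    (n.choose d : ℝ) * (n - d).factorial / n.factorial = 1 / d.factorial := by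
  have hcf : ((n.choose d * d.factorial * (n - d).factorial : ℕ) : ℝ) = (n.factorial : ℕ) := by
    exact_mod_cast congrArg Nat.cast (Nat.choose_mul_factorial_mul_factorial hdn)
  push_cast at hcf
  rw [div_eq_div_iff (by positivity) (by positivity)]
  nlinarith [hcf]

lemma pgt_term (n d : ℕ) (lam : ℝ) (hdn : d ≤ n) :
    (n.choose d : ℝ) * ((Real.exp lam / ∑ e ∈ Finset.range (n + 1), lam ^ e / e.factorial) *
      lam ^ d * Real.exp (-lam) * (n - d).factorial / n.factorial)
    = (Real.exp lam / ∑ e ∈ Finset.range (n + 1), lam ^ e / e.factorial) * Real.exp (-lam) *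
        (lam ^ d / d.factorial) := by
  set c0 : ℝ := Real.exp lam / ∑ e ∈ Finset.range (n + 1), lam ^ e / e.factorial
  calc (n.choose d : ℝ) * (c0 * lam ^ d * Real.exp (-lam) * (n - d).factorial / n.factorial)
      = (c0 * Real.exp (-lam) * lam ^ d) * ((n.choose d : ℝ) * (n - d).factorial / n.factorial) := by
        ring
    _ = (c0 * Real.exp (-lam) * lam ^ d) * (1 / d.factorial) := by
        rw [choose_fact_div n d hdn]
    _ = c0 * Real.exp (-lam) * (lam ^ d / d.factorial) := by ring

lemma sum_pgtWeight (n : ℕ) {lam : ℝ} (hl : 0 < lam) :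
    ∑ S : Finset (Fin n), pgtWeight n lam S = 1 := by
  have h1 : ∑ S : Finset (Fin n), pgtWeight n lam S
      = ∑ d ∈ Finset.range (n+1), (n.choose d : ℝ) *
        ((Real.exp lam / ∑ e ∈ Finset.range (n + 1), lam ^ e / e.factorial) *
          lam ^ d * Real.exp (-lam) * (n - d).factorial / n.factorial) :=
    sum_card_grp n (fun d => (Real.exp lam / ∑ e ∈ Finset.range (n + 1), lam ^ e / e.factorial) *
      lam ^ d * Real.exp (-lam) * (n - d).factorial / n.factorial)
  rw [h1]
  have h2 : ∀ d ∈ Finset.range (n+1), (n.choose d : ℝ) *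
        ((Real.exp lam / ∑ e ∈ Finset.range (n + 1), lam ^ e / e.factorial) *
          lam ^ d * Real.exp (-lam) * (n - d).factorial / n.factorial)
      = (Real.exp lam / ∑ e ∈ Finset.range (n + 1), lam ^ e / e.factorial) * Real.exp (-lam) *
          (lam ^ d / d.factorial) := by
    intro d hd
    exact pgt_term n d lam (Nat.lt_succ_iff.mp (Finset.mem_range.mp hd))
  rw [Finset.sum_congr rfl h2, ← Finset.mul_sum]
  have hS := sumexp_pos n hl
  rw [div_mul_eq_mul_div, div_mul_eq_mul_div, div_eq_one_iff_eq (ne_of_gt hS)]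
  rw [← Real.exp_add]
  simp

lemma fact_mul_pow_le (a : ℕ) (x : ℝ) (hx0 : 0 ≤ x) (hx : x ≤ a + 1) :
    ∀ b : ℕ, a ≤ b → (a.factorial : ℝ) * x ^ (b - a) ≤ b.factorial := by
  intro b
  induction b with
  | zero =>
    intro hab
    interval_cases a
    simp
  | succ c ih =>
    intro hab
    by_cases hac : a ≤ c
    · have he : c + 1 - a = (c - a) + 1 := by omega
      rw [he, pow_succ, ← mul_assoc]
      calc (a.factorial : ℝ) * x ^ (c - a) * x
          ≤ (c.factorial : ℝ) * x := mul_le_mul_of_nonneg_right (ih hac) hx0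
        _ ≤ (c.factorial : ℝ) * (c + 1) := by
            apply mul_le_mul_of_nonneg_left _ (by positivity)
            calc x ≤ (a:ℝ) + 1 := hx
              _ ≤ (c:ℝ) + 1 := by exact_mod_cast add_le_add_left (Nat.cast_le.mpr hac) 1
        _ = ((c+1).factorial : ℝ) := by
            rw [Nat.factorial_succ]; push_cast; ring
    · have : a = c + 1 := by omega
      subst this
      simp

lemma term_le (k T d : ℕ) {lam : ℝ} (hl : 0 < lam) (hkl : lam ≤ (k:ℝ) + 1)
    (hkT : k ≤ T) (hTd : T < d) :
    lam ^ d * k.factorial / (d.factorial * lam ^ k) ≤ (lam / ((T:ℝ)+1)) ^ (d - T) := by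
  have hT1 : (0:ℝ) < (T:ℝ) + 1 := by positivity
  have h1 : (k.factorial : ℝ) * lam ^ (T - k) ≤ T.factorial :=
    fact_mul_pow_le k lam hl.le hkl T hkT
  have h2 : (T.factorial : ℝ) * ((T:ℝ) + 1) ^ (d - T) ≤ d.factorial := by
    have := fact_mul_pow_le T ((T:ℝ)+1) hT1.le (le_refl _) d hTd.le
    exact this
  have hkey : lam ^ (T - k) * k.factorial * ((T:ℝ)+1) ^ (d - T) ≤ d.factorial := by
    calc lam ^ (T - k) * (k.factorial:ℝ) * ((T:ℝ)+1) ^ (d - T)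
        = ((k.factorial:ℝ) * lam ^ (T-k)) * ((T:ℝ)+1) ^ (d - T) := by ring
      _ ≤ (T.factorial : ℝ) * ((T:ℝ)+1) ^ (d - T) :=
          mul_le_mul_of_nonneg_right h1 (by positivity)
      _ ≤ d.factorial := h2
  rw [div_pow, div_le_div_iff₀ (by positivity) (by positivity)]
  have hde : d = k + (T - k) + (d - T) := by omega
  calc lam ^ d * (k.factorial:ℝ) * ((T:ℝ)+1) ^ (d - T)
      = (lam ^ k * lam ^ (d - T)) * (lam ^ (T - k) * k.factorial * ((T:ℝ)+1) ^ (d - T)) := by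
        nth_rewrite 1 [hde]
        rw [pow_add, pow_add]; ring
    _ ≤ (lam ^ k * lam ^ (d - T)) * d.factorial := by
        apply mul_le_mul_of_nonneg_left hkey (by positivity)
    _ = lam ^ (d - T) * ((d.factorial:ℝ) * lam ^ k) := by ring

lemma geom_tail (N T : ℕ) {ρ : ℝ} (h0 : 0 ≤ ρ) (h2 : ρ ≤ 1/2) :
    ∑ d ∈ Finset.Ico (T+1) N, ρ ^ (d - T) ≤ 2 * ρ := by
  rw [Finset.sum_Ico_eq_sum_range]
  have he : ∀ j : ℕ, (T + 1 + j) - T = j + 1 := by omega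
  have h1 : ∑ j ∈ Finset.range (N - (T+1)), ρ ^ ((T+1+j) - T)
      = (∑ j ∈ Finset.range (N - (T+1)), ρ ^ j) * ρ := by
    rw [Finset.sum_mul]
    apply Finset.sum_congr rfl
    intro j _
    rw [he j, pow_succ]
  rw [h1]
  have hgs : ∑ j ∈ Finset.range (N - (T+1)), ρ ^ j ≤ 2 := by
    rw [geom_sum_eq (by linarith : ρ ≠ 1)]
    have hpn : 0 ≤ ρ ^ (N - (T+1)) := by positivity
    rw [div_le_iff_of_neg (by linarith : ρ - 1 < 0)]
    linarith
  calc (∑ j ∈ Finset.range (N - (T+1)), ρ ^ j) * ρ ≤ 2 * ρ :=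
    mul_le_mul_of_nonneg_right hgs h0

lemma filter_range_eq_Ico (n T : ℕ) :
    (Finset.range (n+1)).filter (fun d => T < d) = Finset.Ico (T+1) (n+1) := by
  ext d
  simp only [Finset.mem_filter, Finset.mem_range, Finset.mem_Ico]
  omega

lemma tail_pgt (n T k : ℕ) {lam : ℝ} (hl : 0 < lam) (hkn : k ≤ n)
    (hkl : lam ≤ (k:ℝ) + 1) (hkT : k ≤ T) (hρ : lam / ((T:ℝ)+1) ≤ 1/2) :
    ∑ S ∈ Finset.univ.filter (fun S : Finset (Fin n) => T < S.card), pgtWeight n lam S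
      ≤ 2 * (lam / ((T:ℝ)+1)) := by
  have hS := sumexp_pos n hl
  set Ssum : ℝ := ∑ e ∈ Finset.range (n + 1), lam ^ e / e.factorial with hSsum
  -- rewrite as sum over all S of ite
  rw [Finset.sum_filter]
  have h1 : ∑ S : Finset (Fin n), (if T < S.card then pgtWeight n lam S else 0)
      = ∑ d ∈ Finset.range (n+1), (n.choose d : ℝ) *
          (if T < d then (Real.exp lam / Ssum) * lam ^ d * Real.exp (-lam) * (n - d).factorial
            / n.factorial else 0) :=
    sum_card_grp n (fun d => if T < d then (Real.exp lam / Ssum) * lam ^ d * Real.exp (-lam) *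
      (n - d).factorial / n.factorial else 0)
  rw [h1]
  have h2 : ∀ d ∈ Finset.range (n+1), (n.choose d : ℝ) *
        (if T < d then (Real.exp lam / Ssum) * lam ^ d * Real.exp (-lam) * (n - d).factorial
          / n.factorial else 0)
      = if T < d then (Real.exp lam / Ssum) * Real.exp (-lam) * (lam ^ d / d.factorial) else 0 := by
    intro d hd
    by_cases hTd : T < d
    · rw [if_pos hTd, if_pos hTd]
      exact pgt_term n d lam (Nat.lt_succ_iff.mp (Finset.mem_range.mp hd))
    · rw [if_neg hTd, if_neg hTd, mul_zero]
  rw [Finset.sum_congr rfl h2]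
  -- c0 * exp(-lam) = 1/Ssum
  have hc : (Real.exp lam / Ssum) * Real.exp (-lam) = 1 / Ssum := by
    rw [div_mul_eq_mul_div, ← Real.exp_add]
    simp
  -- Ssum ≥ lam^k/k!
  have hSk : lam ^ k / k.factorial ≤ Ssum := by
    rw [hSsum]
    exact Finset.single_le_sum (f := fun d : ℕ => lam ^ d / (d.factorial:ℝ))
      (fun d _ => by positivity) (Finset.mem_range.mpr (Nat.lt_succ_of_le hkn))
  have hk0 : (0:ℝ) < lam ^ k / k.factorial := by positivity
  have h3 : ∀ d ∈ Finset.range (n+1),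
      (if T < d then (Real.exp lam / Ssum) * Real.exp (-lam) * (lam ^ d / d.factorial) else 0)
      ≤ (if T < d then (lam / ((T:ℝ)+1)) ^ (d - T) else 0) := by
    intro d hd
    by_cases hTd : T < d
    · rw [if_pos hTd, if_pos hTd, hc]
      calc 1 / Ssum * (lam ^ d / d.factorial)
          ≤ 1 / (lam ^ k / k.factorial) * (lam ^ d / d.factorial) := by
            apply mul_le_mul_of_nonneg_right _ (by positivity)
            apply one_div_le_one_div_of_le hk0 hSk
        _ = lam ^ d * k.factorial / (d.factorial * lam ^ k) := by
            field_simp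
        _ ≤ (lam / ((T:ℝ)+1)) ^ (d - T) := term_le k T d hl hkl hkT hTd
    · rw [if_neg hTd, if_neg hTd]
  calc _ ≤ ∑ d ∈ Finset.range (n+1), (if T < d then (lam / ((T:ℝ)+1)) ^ (d - T) else 0) :=
        Finset.sum_le_sum h3
    _ = ∑ d ∈ Finset.Ico (T+1) (n+1), (lam / ((T:ℝ)+1)) ^ (d - T) := by
        rw [← Finset.sum_filter, filter_range_eq_Ico]
    _ ≤ 2 * (lam / ((T:ℝ)+1)) := geom_tail (n+1) T (by positivity) hρ

lemma beta_nonneg {p : ℝ} (hp0 : 0 ≤ p) (hp1 : p ≤ 1) (d : ℕ) :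
    0 ≤ 1 - (1 - Real.exp (-1)) * (p * (1 - p) ^ d) := by
  have ht0 : 0 < Real.exp (-1) := Real.exp_pos _
  have ht1 : Real.exp (-1) ≤ 1 := by rw [Real.exp_le_one_iff]; norm_num
  have h1p0 : 0 ≤ (1 - p) ^ d := pow_nonneg (by linarith) _
  have h1p : (1 - p) ^ d ≤ 1 := pow_le_one₀ (by linarith) (by linarith)
  have hq1 : p * (1 - p) ^ d ≤ 1 := by nlinarith
  have hq0 : 0 ≤ p * (1 - p) ^ d := mul_nonneg hp0 h1p0
  nlinarith

lemma errProbTol_nonneg (n mn v : ℕ) {lam p : ℝ} (hl : 0 < lam) (hp0 : 0 ≤ p)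
    (hp1 : p ≤ 1) : 0 ≤ errProbTol n mn v lam p := by
  apply Finset.sum_nonneg; intro C _
  apply Finset.sum_nonneg; intro S _
  have h1 := bernWeight_nonneg hp0 hp1 C
  have h2 := pgtWeight_nonneg n hl S
  have h3 : (0:ℝ) ≤ (if ∃ z : Fin mn → Bool,
      hammingDist z (outcome C S) ≤ v ∧ tolDecoder C z v ≠ S then (1:ℝ) else 0) := by
    split <;> norm_num
  positivity

lemma errProb_le (n mn v T : ℕ) {lam p : ℝ} (hl : 0 < lam) (hp0 : 0 ≤ p) (hp1 : p ≤ 1) :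
    errProbTol n mn v lam p ≤
      (n:ℝ) * (Real.exp (2 * v) * (1 - (1 - Real.exp (-1)) * (p * (1 - p) ^ T)) ^ mn)
      + ∑ S ∈ Finset.univ.filter (fun S : Finset (Fin n) => T < S.card), pgtWeight n lam S := by
  set B : ℝ := (n:ℝ) * (Real.exp (2 * v) * (1 - (1 - Real.exp (-1)) * (p * (1 - p) ^ T)) ^ mn)
    with hB
  have hβT0 : 0 ≤ 1 - (1 - Real.exp (-1)) * (p * (1 - p) ^ T) := beta_nonneg hp0 hp1 T
  have hB0 : 0 ≤ B := by
    rw [hB]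
    exact mul_nonneg (Nat.cast_nonneg n)
      (mul_nonneg (Real.exp_pos _).le (pow_nonneg hβT0 mn))
  have step1 : errProbTol n mn v lam p
      = ∑ S : Finset (Fin n), pgtWeight n lam S *
          (∑ C : Fin mn → Fin n → Bool, bernWeight p C *
            (if ∃ z : Fin mn → Bool,
              hammingDist z (outcome C S) ≤ v ∧ tolDecoder C z v ≠ S then (1:ℝ) else 0)) := by
    rw [errProbTol, Finset.sum_comm]
    apply Finset.sum_congr rfl
    intro S _
    rw [Finset.mul_sum]
    apply Finset.sum_congr rfl
    intro C _
    ring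
  rw [step1]
  have step2 : ∀ S : Finset (Fin n), pgtWeight n lam S *
      (∑ C : Fin mn → Fin n → Bool, bernWeight p C *
        (if ∃ z : Fin mn → Bool,
          hammingDist z (outcome C S) ≤ v ∧ tolDecoder C z v ≠ S then (1:ℝ) else 0))
      ≤ (if S.card ≤ T then pgtWeight n lam S * B else pgtWeight n lam S) := by
    intro S
    by_cases hc : S.card ≤ T
    · rw [if_pos hc]
      apply mul_le_mul_of_nonneg_left _ (pgtWeight_nonneg n hl S)
      calc _ ≤ (n:ℝ) * (Real.exp (2 * v) *
            (1 - (1 - Real.exp (-1)) * (p * (1 - p) ^ S.card)) ^ mn) :=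
          key_bound mn n v p hp0 hp1 S
        _ ≤ B := by
            rw [hB]
            apply mul_le_mul_of_nonneg_left _ (Nat.cast_nonneg n)
            apply mul_le_mul_of_nonneg_left _ (Real.exp_pos _).le
            apply pow_le_pow_left₀ (beta_nonneg hp0 hp1 S.card)
            have hq : p * (1 - p) ^ T ≤ p * (1 - p) ^ S.card := by
              apply mul_le_mul_of_nonneg_left _ hp0
              exact pow_le_pow_of_le_one (by linarith) (by linarith) hc
            have ht1 : Real.exp (-1) ≤ 1 := by rw [Real.exp_le_one_iff]; norm_num
            nlinarith
    · rw [if_neg hc]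
      nth_rewrite 2 [← mul_one (pgtWeight n lam S)]
      apply mul_le_mul_of_nonneg_left _ (pgtWeight_nonneg n hl S)
      calc ∑ C : Fin mn → Fin n → Bool, bernWeight p C *
            (if ∃ z : Fin mn → Bool,
              hammingDist z (outcome C S) ≤ v ∧ tolDecoder C z v ≠ S then (1:ℝ) else 0)
          ≤ ∑ C : Fin mn → Fin n → Bool, bernWeight p C := by
            apply Finset.sum_le_sum
            intro C _
            apply mul_le_of_le_one_right (bernWeight_nonneg hp0 hp1 C)
            split <;> norm_num
        _ = 1 := sum_bernWeight mn n p
  calc ∑ S : Finset (Fin n), pgtWeight n lam S * _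
      ≤ ∑ S : Finset (Fin n), (if S.card ≤ T then pgtWeight n lam S * B else pgtWeight n lam S) :=
        Finset.sum_le_sum (fun S _ => step2 S)
    _ = (∑ S ∈ Finset.univ.filter (fun S : Finset (Fin n) => S.card ≤ T), pgtWeight n lam S) * B
        + ∑ S ∈ Finset.univ.filter (fun S : Finset (Fin n) => ¬ S.card ≤ T), pgtWeight n lam S := by
        rw [Finset.sum_ite, Finset.sum_mul]
    _ ≤ 1 * B + ∑ S ∈ Finset.univ.filter (fun S : Finset (Fin n) => T < S.card),
          pgtWeight n lam S := by
        apply add_le_add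
        · apply mul_le_mul_of_nonneg_right _ hB0
          calc ∑ S ∈ Finset.univ.filter (fun S : Finset (Fin n) => S.card ≤ T), pgtWeight n lam S
              ≤ ∑ S : Finset (Fin n), pgtWeight n lam S := by
                apply Finset.sum_le_sum_of_subset_of_nonneg (Finset.filter_subset _ _)
                intro S _ _
                exact pgtWeight_nonneg n hl S
            _ = 1 := sum_pgtWeight n hl
        · apply le_of_eq
          apply Finset.sum_congr _ (fun _ _ => rfl)
          apply Finset.filter_congr
          intro S _
          rw [not_le]
    _ = B + _ := by rw [one_mul]

lemma main_term_le (n mn v L T : ℕ) {p : ℝ}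
    (hL1 : 1 ≤ L) (hp : p = 1 / (L:ℝ)) (hTp : (T:ℝ) * p ≤ 1 / 10) (hn1 : 1 ≤ n)
    (hmn : 2 * Real.exp 1 * (L:ℝ) ^ 2 * Real.log n + 4 * Real.exp 1 * v * (L:ℝ) ≤ (mn:ℝ)) :
    (n:ℝ) * (Real.exp (2 * v) * (1 - (1 - Real.exp (-1)) * (p * (1 - p) ^ T)) ^ mn)
      ≤ (((n:ℝ) ^ 2))⁻¹ := by
  set E : ℝ := Real.exp 1 with hEdef
  have hE : (2.7182818283 : ℝ) < E := Real.exp_one_gt_d9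
  set t : ℝ := Real.exp (-1) with htdef
  have htE : t * E = 1 := by rw [htdef, hEdef, ← Real.exp_add]; norm_num
  have ht0 : 0 < t := Real.exp_pos _
  have ht1 : t ≤ 1 := by rw [htdef, Real.exp_le_one_iff]; norm_num
  clear_value E t
  have hLpos : (0:ℝ) < (L:ℝ) := by exact_mod_cast Nat.lt_of_lt_of_le Nat.zero_lt_one hL1
  have hL1R : (1:ℝ) ≤ (L:ℝ) := by exact_mod_cast hL1
  have hp0 : 0 ≤ p := by rw [hp]; positivity
  have hp1 : p ≤ 1 := by rw [hp]; rw [div_le_one hLpos]; exact hL1R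
  have hnpos : (0:ℝ) < (n:ℝ) := by exact_mod_cast Nat.lt_of_lt_of_le Nat.zero_lt_one hn1
  have hln0 : 0 ≤ Real.log n := Real.log_nonneg (by exact_mod_cast hn1)
  set q : ℝ := p * (1 - p) ^ T with hq
  -- q ≥ (9/10)/L
  have hBern : 1 - (T:ℝ) * p ≤ (1 - p) ^ T := by
    have := one_add_mul_le_pow (a := -p) (by linarith) T
    calc 1 - (T:ℝ) * p = 1 + (T:ℝ) * (-p) := by ring
      _ ≤ (1 + (-p)) ^ T := this
      _ = (1 - p) ^ T := by ring_nf
  have hqlow : (9/10) * (1/(L:ℝ)) ≤ q := by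
    rw [hq, hp]
    have h1 : (9:ℝ)/10 ≤ (1 - 1/(L:ℝ)) ^ T := by
      rw [hp] at hBern hTp
      linarith
    calc (9/10) * (1/(L:ℝ)) = (1/(L:ℝ)) * (9/10) := by ring
      _ ≤ (1/(L:ℝ)) * (1 - 1/(L:ℝ)) ^ T := by
          apply mul_le_mul_of_nonneg_left h1 (by positivity)
  have hq0 : 0 ≤ q := le_trans (by positivity) hqlow
  have hq1 : q ≤ 1 := by
    rw [hq]
    have h1p : (1 - p) ^ T ≤ 1 := pow_le_one₀ (by linarith) (by linarith)
    have h1p0 : (0:ℝ) ≤ (1 - p) ^ T := pow_nonneg (by linarith) _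
    nlinarith
  -- β ≤ exp (-(1-t) q)
  have hbeta : 1 - (1 - t) * q ≤ Real.exp (-((1 - t) * q)) := by
    have := Real.add_one_le_exp (-((1 - t) * q))
    linarith
  have hbeta0 : 0 ≤ 1 - (1 - t) * q := by nlinarith
  have hpow : (1 - (1 - t) * q) ^ mn ≤ Real.exp (-((mn:ℝ) * ((1 - t) * q))) := by
    calc (1 - (1 - t) * q) ^ mn ≤ (Real.exp (-((1 - t) * q))) ^ mn :=
        pow_le_pow_left₀ hbeta0 hbeta mn
      _ = Real.exp ((mn:ℝ) * (-((1 - t) * q))) := (Real.exp_nat_mul _ mn).symm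
      _ = Real.exp (-((mn:ℝ) * ((1 - t) * q))) := by ring_nf
  -- key numeric inequality
  have hkey : 3 * Real.log n + 3 * (v:ℝ) ≤ (mn:ℝ) * ((1 - t) * q) := by
    have he1 : (1 - t) * (9/10) * (2*E) = (9/5) * E - (9/5) * (t * E) := by ring
    have he2 : (1 - t) * (9/10) * (4*E) = (18/5) * E - (18/5) * (t * E) := by ring
    rw [htE] at he1 he2
    have hc1 : (3:ℝ) ≤ (1 - t) * (9/10) * (2*E) := by rw [he1]; linarith
    have hc2 : (3:ℝ) ≤ (1 - t) * (9/10) * (4*E) := by rw [he2]; linarith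
    have hθ0 : 0 ≤ 1 - t := by linarith
    have hM0 : (0:ℝ) ≤ 2 * E * (L:ℝ) ^ 2 * Real.log n + 4 * E * v * (L:ℝ) := by
      have hE0 : (0:ℝ) ≤ E := by linarith
      positivity
    have step : (2 * E * (L:ℝ) ^ 2 * Real.log n + 4 * E * v * (L:ℝ)) * ((1 - t) * ((9/10) * (1/(L:ℝ))))
        ≤ (mn:ℝ) * ((1 - t) * q) := by
      apply mul_le_mul hmn _ (by positivity) (by exact_mod_cast Nat.cast_nonneg mn)
      exact mul_le_mul_of_nonneg_left hqlow hθ0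
    refine le_trans ?_ step
    have hexpand : (2 * E * (L:ℝ) ^ 2 * Real.log n + 4 * E * v * (L:ℝ)) *
          ((1 - t) * ((9/10) * (1/(L:ℝ))))
        = ((1 - t) * (9/10) * (2*E)) * ((L:ℝ) * Real.log n)
          + ((1 - t) * (9/10) * (4*E)) * (v:ℝ) := by
      field_simp
    rw [hexpand]
    have hLln : Real.log n ≤ (L:ℝ) * Real.log n := le_mul_of_one_le_left hln0 hL1R
    have t1 : 3 * Real.log n ≤ ((1 - t) * (9/10) * (2*E)) * ((L:ℝ) * Real.log n) := by
      calc 3 * Real.log n ≤ 3 * ((L:ℝ) * Real.log n) := by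
            apply mul_le_mul_of_nonneg_left hLln (by norm_num)
        _ ≤ _ := by
            apply mul_le_mul_of_nonneg_right hc1 (by positivity)
    have t2 : 3 * (v:ℝ) ≤ ((1 - t) * (9/10) * (4*E)) * (v:ℝ) := by
      apply mul_le_mul_of_nonneg_right hc2 (Nat.cast_nonneg v)
    linarith
  -- assemble
  have hfinal : Real.exp (2 * v) * (1 - (1 - t) * q) ^ mn ≤ Real.exp (-(3 * Real.log n)) := by
    calc Real.exp (2 * v) * (1 - (1 - t) * q) ^ mn
        ≤ Real.exp (2 * v) * Real.exp (-((mn:ℝ) * ((1 - t) * q))) :=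
          mul_le_mul_of_nonneg_left hpow (Real.exp_pos _).le
      _ = Real.exp (2 * (v:ℝ) - (mn:ℝ) * ((1 - t) * q)) := by rw [← Real.exp_add]; ring_nf
      _ ≤ Real.exp (-(v:ℝ) - 3 * Real.log n) := by
          apply Real.exp_le_exp.mpr
          linarith
      _ ≤ Real.exp (-(3 * Real.log n)) := by
          apply Real.exp_le_exp.mpr
          have : (0:ℝ) ≤ (v:ℝ) := Nat.cast_nonneg v
          linarith
  have hexp3 : Real.exp (-(3 * Real.log n)) = (((n:ℝ)) ^ 3)⁻¹ := by
    rw [← Real.exp_log (by positivity : (0:ℝ) < (n:ℝ) ^ 3)]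
    rw [Real.log_pow]
    rw [Real.exp_neg]
    norm_num
  calc (n:ℝ) * (Real.exp (2 * v) * (1 - (1 - t) * q) ^ mn)
      ≤ (n:ℝ) * (((n:ℝ)) ^ 3)⁻¹ := by
        apply mul_le_mul_of_nonneg_left _ hnpos.le
        rw [← hexp3]; exact hfinal
    _ = (((n:ℝ)) ^ 2)⁻¹ := by
        field_simp


theorem stmt3 (lam : ℕ → ℝ) (hpos : ∀ n, 0 < lam n)
    (hlamo : Tendsto (fun n => lam n / n) atTop (nhds 0))
    (hlaminf : Tendsto lam atTop atTop)
    (ε : ℝ) (hε : 0 < ε) (v : ℕ → ℕ)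
    (p : ℕ → ℝ) (hp : ∀ n, p n = 1 / (⌈lam n ^ ((1 : ℝ) + ε)⌉₊ : ℝ))
    (m : ℕ → ℕ)
    (hm : ∀ n, m n = ⌈2 * Real.exp 1 * (⌈lam n ^ ((1 : ℝ) + ε)⌉₊ : ℝ) ^ 2 * Real.log n
        + 4 * Real.exp 1 * v n * (⌈lam n ^ ((1 : ℝ) + ε)⌉₊ : ℝ)⌉₊) :
    Tendsto (fun n => errProbTol n (m n) (v n) (lam n) (p n)) atTop (nhds 0) := by
  -- basic facts about p
  have hL1 : ∀ n, 1 ≤ ⌈lam n ^ ((1 : ℝ) + ε)⌉₊ := by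
    intro n
    rw [Nat.one_le_ceil_iff]
    exact Real.rpow_pos_of_pos (hpos n) _
  have hp0 : ∀ n, 0 ≤ p n := by
    intro n; rw [hp n]; positivity
  have hp1 : ∀ n, p n ≤ 1 := by
    intro n
    rw [hp n, div_le_one (by exact_mod_cast Nat.lt_of_lt_of_le Nat.zero_lt_one (hL1 n))]
    exact_mod_cast hL1 n
  -- the dominating function
  apply squeeze_zero' (g := fun n : ℕ => ((n:ℝ) ^ 2)⁻¹ + 2 * (lam n ^ (-(ε/2))))
  · exact Filter.Eventually.of_forall fun n => errProbTol_nonneg _ _ _ (hpos n) (hp0 n) (hp1 n)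
  · -- the main eventual bound
    have hA : ∀ᶠ n in atTop, 1 ≤ lam n := hlaminf.eventually_ge_atTop 1
    have hB : ∀ᶠ n in atTop, 20 ≤ lam n ^ (ε/2) :=
      ((tendsto_rpow_atTop (by linarith : 0 < ε/2)).comp hlaminf).eventually_ge_atTop 20
    have hC : ∀ᶠ n in atTop, lam n / n < 1 :=
      hlamo.eventually_lt_const one_pos
    have hD : ∀ᶠ n : ℕ in atTop, 1 ≤ n := eventually_ge_atTop 1
    filter_upwards [hA, hB, hC, hD] with n h1 h20 hdiv hn1
    set L : ℕ := ⌈lam n ^ ((1 : ℝ) + ε)⌉₊ with hLdef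
    set T : ℕ := ⌈lam n ^ ((1 : ℝ) + ε/2)⌉₊ with hTdef
    set k : ℕ := ⌊lam n⌋₊ with hkdef
    have hlp : 0 < lam n := hpos n
    have hnR : (1:ℝ) ≤ (n:ℝ) := by exact_mod_cast hn1
    have hnpos : (0:ℝ) < (n:ℝ) := by linarith
    -- rpow facts
    have hX1 : (1:ℝ) ≤ lam n ^ ((1:ℝ) + ε/2) := by
      calc (1:ℝ) = lam n ^ (0:ℝ) := (Real.rpow_zero _).symm
        _ ≤ lam n ^ ((1:ℝ) + ε/2) := Real.rpow_le_rpow_of_exponent_le h1 (by linarith)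
    have hTlow : lam n ^ ((1:ℝ) + ε/2) ≤ (T:ℝ) := Nat.le_ceil _
    have hTup : (T:ℝ) ≤ lam n ^ ((1:ℝ) + ε/2) + 1 :=
      (Nat.ceil_lt_add_one (by positivity)).le
    have hLlow : lam n ^ ((1:ℝ) + ε) ≤ (L:ℝ) := Nat.le_ceil _
    have hsplit : lam n ^ ((1:ℝ) + ε) = lam n ^ ((1:ℝ) + ε/2) * lam n ^ (ε/2) := by
      rw [← Real.rpow_add hlp]; ring_nf
    have hLbig : 10 * ((T:ℝ)) ≤ (L:ℝ) := by
      calc 10 * (T:ℝ) ≤ 10 * (lam n ^ ((1:ℝ) + ε/2) + 1) := by linarith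
        _ ≤ 20 * lam n ^ ((1:ℝ) + ε/2) := by linarith
        _ ≤ lam n ^ ((1:ℝ) + ε/2) * lam n ^ (ε/2) := by nlinarith
        _ = lam n ^ ((1:ℝ) + ε) := hsplit.symm
        _ ≤ (L:ℝ) := hLlow
    have hLpos : (0:ℝ) < (L:ℝ) := by exact_mod_cast Nat.lt_of_lt_of_le Nat.zero_lt_one (hL1 n)
    have hTp : (T:ℝ) * p n ≤ 1/10 := by
      rw [hp n, ← hLdef, mul_one_div, div_le_div_iff₀ hLpos (by norm_num)]
      linarith
    -- floor facts
    have hkl : lam n ≤ (k:ℝ) + 1 := (Nat.lt_floor_add_one (lam n)).le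
    have hklam : (k:ℝ) ≤ lam n := Nat.floor_le hlp.le
    have hlamn : lam n < (n:ℝ) := by
      rw [div_lt_one hnpos] at hdiv; exact hdiv
    have hkn : k ≤ n := by
      have : (k:ℝ) ≤ (n:ℝ) := by linarith
      exact_mod_cast this
    have hlam1 : lam n = lam n ^ ((1:ℝ)) := (Real.rpow_one _).symm
    have hkT : k ≤ T := by
      have : (k:ℝ) ≤ (T:ℝ) := by
        calc (k:ℝ) ≤ lam n := hklam
          _ = lam n ^ ((1:ℝ)) := hlam1
          _ ≤ lam n ^ ((1:ℝ) + ε/2) := Real.rpow_le_rpow_of_exponent_le h1 (by linarith)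
          _ ≤ (T:ℝ) := hTlow
      exact_mod_cast this
    -- rho facts
    have hrw : lam n / lam n ^ ((1:ℝ) + ε/2) = lam n ^ (-(ε/2)) := by
      have h := Real.rpow_sub hlp 1 (1 + ε/2)
      rw [Real.rpow_one] at h
      rw [← h]
      norm_num
    have hρ1 : lam n / ((T:ℝ) + 1) ≤ lam n ^ (-(ε/2)) := by
      rw [← hrw]
      apply div_le_div_of_nonneg_left hlp.le (by positivity)
      linarith
    have hinv : lam n ^ (-(ε/2)) ≤ 1/20 := by
      rw [Real.rpow_neg hlp.le]
      rw [inv_le_comm₀ (by linarith) (by norm_num)]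
      linarith
    have hρ2 : lam n / ((T:ℝ) + 1) ≤ 1/2 := by
      calc lam n / ((T:ℝ) + 1) ≤ lam n ^ (-(ε/2)) := hρ1
        _ ≤ 1/20 := hinv
        _ ≤ 1/2 := by norm_num
    -- m bound
    have hmn : 2 * Real.exp 1 * (L:ℝ) ^ 2 * Real.log n
        + 4 * Real.exp 1 * (v n) * (L:ℝ) ≤ ((m n : ℕ):ℝ) := by
      rw [hm n, ← hLdef]
      exact Nat.le_ceil _
    -- combine
    calc errProbTol n (m n) (v n) (lam n) (p n)
        ≤ (n:ℝ) * (Real.exp (2 * (v n)) *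
            (1 - (1 - Real.exp (-1)) * (p n * (1 - p n) ^ T)) ^ (m n))
          + ∑ S ∈ Finset.univ.filter (fun S : Finset (Fin n) => T < S.card),
              pgtWeight n (lam n) S :=
          errProb_le n (m n) (v n) T hlp (hp0 n) (hp1 n)
      _ ≤ ((n:ℝ) ^ 2)⁻¹ + 2 * (lam n / ((T:ℝ) + 1)) := by
          apply add_le_add
          · exact main_term_le n (m n) (v n) L T (hL1 n) (by rw [hp n]) hTp hn1 hmn
          · exact tail_pgt n T k hlp hkn hkl hkT hρ2
      _ ≤ ((n:ℝ) ^ 2)⁻¹ + 2 * (lam n ^ (-(ε/2))) := by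
          apply add_le_add_right
          linarith
  · -- the dominating function tends to 0
    have hg1 : Tendsto (fun n : ℕ => ((n:ℝ) ^ 2)⁻¹) atTop (nhds 0) := by
      apply Tendsto.inv_tendsto_atTop
      exact (tendsto_pow_atTop (two_ne_zero)).comp tendsto_natCast_atTop_atTop
    have hg2 : Tendsto (fun n : ℕ => lam n ^ (-(ε/2))) atTop (nhds 0) :=
      (tendsto_rpow_neg_atTop (by linarith : 0 < ε/2)).comp hlaminf
    have := hg1.add ((hg2.const_mul 2))
    simpa using this
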